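/- arXiv:1504.05311 — 2 statements merged into one kernel-verified Lean document; each statement's English description precedes it below -/
import Mathlib

section
/- With A, B Hermitian PSD, c₀ > 0, P_i > 0, and Σ_i D_i positive definite, the feasible set {(Y, ν) : Y ⪰ 0, ν ≥ 0, Tr(B Y) + c₀ ν = 1, Tr(D_i Y) ≤ P_i ν ∀i} is compact (closed and bounded), and hence the SDP of maximizing Tr(A Y) over it attains its maximum. -/
open Matrix ComplexOrder

variable {d : ℕ}

lemma star_single_one (j : Fin d) : star (Pi.single j (1:ℂ) : Fin d → ℂ) = Pi.single j 1 := by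
  ext i; by_cases h : i = j <;> simp [Pi.single_apply, h]

lemma psd_diag_re_nonneg {M : Matrix (Fin d) (Fin d) ℂ} (hM : M.PosSemidef) (j : Fin d) :
    0 ≤ (M j j).re := by
  have := hM.re_dotProduct_nonneg (Pi.single j 1)
  simpa [Matrix.mulVec_single, star_single_one, single_dotProduct] using this

lemma psd_trace_re_nonneg {M : Matrix (Fin d) (Fin d) ℂ} (hM : M.PosSemidef) :
    0 ≤ M.trace.re := by
  rw [Matrix.trace, Complex.re_sum]
  exact Finset.sum_nonneg fun j _ => psd_diag_re_nonneg hM j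

lemma psd_trace_mul_re_nonneg {M N : Matrix (Fin d) (Fin d) ℂ}
    (hM : M.PosSemidef) (hN : N.PosSemidef) : 0 ≤ ((M * N).trace).re := by
  open MatrixOrder in obtain ⟨Bm, rfl⟩ := CStarAlgebra.nonneg_iff_eq_star_mul_self.mp hM.nonneg
  have h1 : (Bm * N * Bmᴴ).PosSemidef := hN.mul_mul_conjTranspose_same _
  rw [Matrix.star_eq_conjTranspose, ← Matrix.trace_mul_cycle]
  exact psd_trace_re_nonneg h1

lemma psd_diag_re_le_trace {M : Matrix (Fin d) (Fin d) ℂ} (hM : M.PosSemidef) (j : Fin d) :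
    (M j j).re ≤ M.trace.re := by
  rw [Matrix.trace, Complex.re_sum]
  exact Finset.single_le_sum (fun i _ => psd_diag_re_nonneg hM i) (Finset.mem_univ j)

lemma psd_diag_real {M : Matrix (Fin d) (Fin d) ℂ} (hM : M.PosSemidef) (j : Fin d) :
    (M j j).im = 0 := by
  have h := congrFun (congrFun hM.isHermitian.eq j) j
  rw [Matrix.conjTranspose_apply] at h
  exact Complex.conj_eq_iff_im.mp h

lemma psd_entry_norm_le_trace {Y : Matrix (Fin d) (Fin d) ℂ} (hY : Y.PosSemidef) (j k : Fin d) :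
    ‖Y j k‖ ≤ Y.trace.re := by
  by_cases hjk : Y j k = 0
  · simp [hjk, psd_trace_re_nonneg hY]
  by_cases hjk' : j = k
  · subst hjk'
    have him : (Y j j).im = 0 := psd_diag_real hY j
    have : Y j j = ((Y j j).re : ℂ) := Complex.ext rfl (by simp [him])
    rw [this, Complex.norm_real, Real.norm_eq_abs, abs_of_nonneg (psd_diag_re_nonneg hY j)]
    exact psd_diag_re_le_trace hY j
  · set r : ℝ := ‖Y j k‖ with hr
    set c : ℂ := -(r : ℂ) / Y j k with hcdef
    have hnc : ‖c‖ = 1 := by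
      rw [hcdef, norm_div, norm_neg, Complex.norm_real, Real.norm_eq_abs, abs_of_nonneg (norm_nonneg _), ← hr]
      exact div_self (by simpa [hr] using hjk)
    have hcc : (starRingEnd ℂ) c * c = 1 := by
      rw [mul_comm, Complex.mul_conj]
      norm_cast
      rw [Complex.normSq_eq_norm_sq, hnc]; norm_num
    have hc : c * Y j k = -(r : ℂ) := by
      rw [hcdef, div_mul_cancel₀ _ hjk]
    set x : Fin d → ℂ := Pi.single j 1 + c • (Pi.single k 1 : Fin d → ℂ) with hxdef
    have hq : star x ⬝ᵥ Y *ᵥ x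
        = Y j j + c * Y j k + (starRingEnd ℂ) c * Y k j + ((starRingEnd ℂ) c * c) * Y k k := by
      simp only [hxdef, star_add, star_smul, star_single_one, Matrix.mulVec_add,
        Matrix.mulVec_smul, add_dotProduct, dotProduct_add,
        smul_dotProduct, dotProduct_smul, single_dotProduct,
        Matrix.mulVec_single, smul_eq_mul, RCLike.star_def, MulOpposite.op_one, one_smul,
        Matrix.col_apply, one_mul]
      ring
    have hkj : Y k j = (starRingEnd ℂ) (Y j k) := by
      have h := congrFun (congrFun hY.isHermitian.eq k) j
      rw [Matrix.conjTranspose_apply] at h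
      exact h.symm
    have hq2 : star x ⬝ᵥ Y *ᵥ x = Y j j + Y k k - 2 * (r : ℂ) := by
      rw [hq, hkj, ← (starRingEnd ℂ).map_mul, hc, hcc]
      have : (starRingEnd ℂ) (-(r : ℂ)) = -(r : ℂ) := by
        simp [Complex.conj_ofReal]
      rw [this]; ring
    have h0 := hY.re_dotProduct_nonneg x
    rw [hq2] at h0
    simp only [Complex.sub_re, Complex.add_re, Complex.mul_re, Complex.ofReal_re,
      Complex.ofReal_im, RCLike.re_to_complex, Complex.re_ofNat, Complex.im_ofNat] at h0
    have h1 := psd_diag_re_le_trace hY j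
    have h2 := psd_diag_re_le_trace hY k
    linarith
variable {d : ℕ}

lemma posdef_exists_eps {Dm : Matrix (Fin d) (Fin d) ℂ} (h : Dm.PosDef) :
    ∃ ε : ℝ, 0 < ε ∧ (Dm - (ε : ℂ) • 1).PosSemidef := by
  rcases Nat.eq_zero_or_pos d with hd | hd
  · subst hd
    refine ⟨1, one_pos, ?_⟩
    have : Dm - ((1:ℝ) : ℂ) • 1 = 0 := Subsingleton.elim _ _
    rw [this]; exact .zero
  · haveI : Nonempty (Fin d) := Fin.pos_iff_nonempty.mp hd
    have hne : (Finset.univ : Finset (Fin d)).Nonempty := Finset.univ_nonempty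
    obtain ⟨i₀, -, hmin⟩ := Finset.exists_min_image Finset.univ h.isHermitian.eigenvalues hne
    set ε : ℝ := h.isHermitian.eigenvalues i₀ with hε
    refine ⟨ε, h.eigenvalues_pos i₀, ?_⟩
    set U : Matrix (Fin d) (Fin d) ℂ := (h.isHermitian.eigenvectorUnitary : Matrix (Fin d) (Fin d) ℂ) with hU
    have hUU : U * star U = 1 := (Matrix.mem_unitaryGroup_iff).mp h.isHermitian.eigenvectorUnitary.2
    have key : Dm - (ε : ℂ) • 1
        = U * diagonal (fun i => ((h.isHermitian.eigenvalues i - ε : ℝ) : ℂ)) * star U := by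
      have hsp := h.isHermitian.spectral_theorem
      rw [Unitary.conjStarAlgAut_apply, ← hU] at hsp
      have hdiag : diagonal (RCLike.ofReal ∘ h.isHermitian.eigenvalues)
          = diagonal (fun i => ((h.isHermitian.eigenvalues i - ε : ℝ) : ℂ)) + (ε : ℂ) • 1 := by
        ext i j
        by_cases hij : i = j
        · subst hij
          simp only [Matrix.diagonal_apply_eq, Function.comp_apply, Matrix.add_apply,
            Matrix.smul_apply, Matrix.one_apply_eq, smul_eq_mul, mul_one, Complex.ofReal_sub,
            RCLike.ofReal_alg, Complex.real_smul]
          ring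
        · simp [Matrix.diagonal_apply_ne _ hij, Matrix.one_apply_ne hij]
      have heq : U * diagonal (fun i => ((h.isHermitian.eigenvalues i - ε : ℝ) : ℂ)) * star U
          + (ε : ℂ) • 1 = Dm := by
        conv_rhs => rw [hsp]
        rw [hdiag, Matrix.mul_add, Matrix.add_mul, Matrix.mul_smul, Matrix.smul_mul,
          mul_one, hUU]
      exact sub_eq_of_eq_add heq.symm
    rw [key]
    have hdpsd : (diagonal (fun i => ((h.isHermitian.eigenvalues i - ε : ℝ) : ℂ))).PosSemidef := by
      refine Matrix.posSemidef_diagonal_iff.mpr fun i => ?_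
      rw [Complex.zero_le_real]
      have := hmin i (Finset.mem_univ i)
      linarith
    simpa [Matrix.star_eq_conjTranspose] using hdpsd.mul_mul_conjTranspose_same U
/-- solvability of (P3): the feasible set is compact and the
SDP attains its maximum. -/
theorem stmt_7 {d L : ℕ} (A B : Matrix (Fin d) (Fin d) ℂ)
    (hA : A.PosSemidef) (hB : B.PosSemidef)
    (D : Fin L → Matrix (Fin d) (Fin d) ℂ) (hD : ∀ i, (D i).PosSemidef)
    (hDsum : (∑ i, D i).PosDef)
    (c₀ : ℝ) (hc₀ : 0 < c₀) (P : Fin L → ℝ) (hP : ∀ i, 0 < P i)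
    (S : Set (Matrix (Fin d) (Fin d) ℂ × ℝ))
    (hS : S = {p | p.1.PosSemidef ∧ 0 ≤ p.2 ∧
      ((B * p.1).trace).re + c₀ * p.2 = 1 ∧
      ∀ i, ((D i * p.1).trace).re ≤ P i * p.2}) :
    IsCompact S ∧ ∃ p ∈ S, ∀ q ∈ S, ((A * q.1).trace).re ≤ ((A * p.1).trace).re := by
  letI := Complex.orderClosedTopology
  have htrcont : ∀ C : Matrix (Fin d) (Fin d) ℂ,
      Continuous fun p : Matrix (Fin d) (Fin d) ℂ × ℝ => ((C * p.1).trace).re := fun C =>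
    Complex.continuous_re.comp (continuous_const.matrix_mul continuous_fst).matrix_trace
  -- S is closed
  have hclosed : IsClosed S := by
    rw [hS]
    have h1 : IsClosed {p : Matrix (Fin d) (Fin d) ℂ × ℝ | p.1.PosSemidef} := by
      have heq : {p : Matrix (Fin d) (Fin d) ℂ × ℝ | p.1.PosSemidef}
          = {p : Matrix (Fin d) (Fin d) ℂ × ℝ | p.1ᴴ = p.1}
            ∩ ⋂ x : Fin d → ℂ, {p : Matrix (Fin d) (Fin d) ℂ × ℝ | 0 ≤ star x ⬝ᵥ p.1 *ᵥ x} := by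
        ext p
        simp only [Set.mem_setOf_eq, Set.mem_inter_iff, Set.mem_iInter]
        exact ⟨fun h => ⟨h.1, h.dotProduct_mulVec_nonneg⟩, fun h => Matrix.PosSemidef.of_dotProduct_mulVec_nonneg h.1 h.2⟩
      rw [heq]
      refine (isClosed_eq continuous_fst.matrix_conjTranspose continuous_fst).inter
        (isClosed_iInter fun x => isClosed_le continuous_const ?_)
      exact continuous_const.dotProduct (continuous_fst.matrix_mulVec continuous_const)
    have h2 : IsClosed {p : Matrix (Fin d) (Fin d) ℂ × ℝ | 0 ≤ p.2} :=
      isClosed_le continuous_const continuous_snd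
    have h3 : IsClosed {p : Matrix (Fin d) (Fin d) ℂ × ℝ |
        ((B * p.1).trace).re + c₀ * p.2 = 1} :=
      isClosed_eq ((htrcont B).add (continuous_const.mul continuous_snd)) continuous_const
    have h4 : IsClosed {p : Matrix (Fin d) (Fin d) ℂ × ℝ |
        ∀ i, ((D i * p.1).trace).re ≤ P i * p.2} := by
      have : {p : Matrix (Fin d) (Fin d) ℂ × ℝ | ∀ i, ((D i * p.1).trace).re ≤ P i * p.2}
          = ⋂ i, {p : Matrix (Fin d) (Fin d) ℂ × ℝ | ((D i * p.1).trace).re ≤ P i * p.2} := by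
        ext p; simp [Set.mem_iInter]
      rw [this]
      exact isClosed_iInter fun i =>
        isClosed_le (htrcont (D i)) (continuous_const.mul continuous_snd)
    have : {p : Matrix (Fin d) (Fin d) ℂ × ℝ | p.1.PosSemidef ∧ 0 ≤ p.2 ∧
        ((B * p.1).trace).re + c₀ * p.2 = 1 ∧ ∀ i, ((D i * p.1).trace).re ≤ P i * p.2}
        = {p : Matrix (Fin d) (Fin d) ℂ × ℝ | p.1.PosSemidef}
          ∩ ({p | 0 ≤ p.2} ∩ ({p | ((B * p.1).trace).re + c₀ * p.2 = 1}
          ∩ {p | ∀ i, ((D i * p.1).trace).re ≤ P i * p.2})) := by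
      ext p; simp only [Set.mem_setOf_eq, Set.mem_inter_iff]
    rw [this]
    exact h1.inter (h2.inter (h3.inter h4))
  -- boundedness
  obtain ⟨ε, hε, hεpsd⟩ := posdef_exists_eps hDsum
  set Mb : ℝ := (∑ i, P i) / (c₀ * ε) with hMb
  have hsum_nonneg : 0 ≤ ∑ i, P i := Finset.sum_nonneg fun i _ => (hP i).le
  have hbound : ∀ p ∈ S, (∀ j k, p.1 j k ∈ Metric.closedBall (0:ℂ) Mb) ∧ p.2 ∈ Set.Icc 0 (1/c₀) := by
    rintro p hp
    rw [hS] at hp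
    obtain ⟨hpsd, hν, heq, hle⟩ := hp
    have htrB : 0 ≤ ((B * p.1).trace).re := psd_trace_mul_re_nonneg hB hpsd
    have hν' : p.2 ≤ 1 / c₀ := by
      rw [le_div_iff₀ hc₀]
      nlinarith
    refine ⟨?_, ⟨hν, hν'⟩⟩
    -- trace bound
    have h0 : 0 ≤ ((((∑ i, D i) - (ε:ℂ) • 1) * p.1).trace).re :=
      psd_trace_mul_re_nonneg hεpsd hpsd
    have hexp : (((∑ i, D i) - (ε:ℂ) • 1) * p.1).trace
        = (∑ i, (D i * p.1).trace) - (ε:ℂ) • p.1.trace := by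
      rw [Matrix.sub_mul, Matrix.smul_mul, one_mul, Matrix.trace_sub, Matrix.trace_smul,
        Finset.sum_mul, Matrix.trace_sum]
    rw [hexp] at h0
    have h0' : ε * p.1.trace.re ≤ ∑ i, ((D i * p.1).trace).re := by
      have := h0
      simp only [Complex.sub_re, Complex.re_sum, smul_eq_mul, Complex.mul_re,
        Complex.ofReal_re, Complex.ofReal_im, zero_mul, sub_zero] at this
      linarith
    have hsumle : ∑ i, ((D i * p.1).trace).re ≤ (∑ i, P i) * p.2 := by
      rw [Finset.sum_mul]
      exact Finset.sum_le_sum fun i _ => hle i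
    have htr : p.1.trace.re ≤ Mb := by
      rw [hMb, ← div_div, le_div_iff₀ hε]
      have h5 : (∑ i, P i) * p.2 ≤ (∑ i, P i) * (1/c₀) :=
        mul_le_mul_of_nonneg_left hν' hsum_nonneg
      calc p.1.trace.re * ε = ε * p.1.trace.re := mul_comm _ _
        _ ≤ ∑ i, ((D i * p.1).trace).re := h0'
        _ ≤ (∑ i, P i) * p.2 := hsumle
        _ ≤ (∑ i, P i) * (1/c₀) := h5
        _ = (∑ i, P i) / c₀ := by ring
    intro j k
    rw [Metric.mem_closedBall, dist_zero_right]
    exact le_trans (psd_entry_norm_le_trace hpsd j k) htr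
  -- compactness
  have hKcomp : IsCompact {Y : Matrix (Fin d) (Fin d) ℂ |
      ∀ j k, Y j k ∈ Metric.closedBall (0:ℂ) Mb} := by
    have h1 : IsCompact ((Set.univ.pi fun _ : Fin d => Set.univ.pi fun _ : Fin d =>
        Metric.closedBall (0:ℂ) Mb) : Set (Fin d → Fin d → ℂ)) :=
      isCompact_univ_pi fun _ => isCompact_univ_pi fun _ => isCompact_closedBall _ _
    have h2 : {Y : Matrix (Fin d) (Fin d) ℂ | ∀ j k, Y j k ∈ Metric.closedBall (0:ℂ) Mb}
        = ((Set.univ.pi fun _ : Fin d => Set.univ.pi fun _ : Fin d =>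
        Metric.closedBall (0:ℂ) Mb) : Set (Fin d → Fin d → ℂ)) := by
      ext Y
      constructor
      · exact fun h j _ k _ => h j k
      · exact fun h j k => h j (Set.mem_univ j) k (Set.mem_univ k)
    rw [h2]; exact h1
  have hScomp : IsCompact S := by
    refine (hKcomp.prod (isCompact_Icc (a := (0:ℝ)) (b := 1/c₀))).of_isClosed_subset hclosed ?_
    intro p hp
    exact Set.mem_prod.mpr ⟨(hbound p hp).1, (hbound p hp).2⟩
  -- nonemptiness
  have hne : S.Nonempty := by
    refine ⟨(0, 1/c₀), ?_⟩
    rw [hS]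
    refine ⟨Matrix.PosSemidef.zero, by positivity, ?_, fun i => ?_⟩
    · simp [mul_one_div, mul_inv_cancel₀ hc₀.ne']
    · simp only [mul_zero, Matrix.trace_zero, Complex.zero_re]
      exact mul_nonneg (hP i).le (by positivity)
  obtain ⟨p, hpS, hmax⟩ := hScomp.exists_isMaxOn hne (htrcont A).continuousOn
  exact ⟨hScomp, p, hpS, fun q hq => hmax hq⟩
end

section
/- Let h ∈ ℂᴺ be nonzero, β ∈ ℂ nonzero, σ² > 0, P̄ > 0, and α ∈ ℝ with ασ² ≤ 1. Then the minimizer of g(f) = (ασ²−1)|hᴴf|² − 2 Re(β hᴴ f) over {f : ‖f‖₂² ≤ P̄} is f⋆ = √P̄ β̄ h/(|β| ‖h‖₂), i.e. the full-power vector aligned with β̄ h. -/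
open Matrix

/-- Theorem 6, Cases I and III, ασ² ≤ 1: the minimizer of
g(f) = (ασ²−1)|hᴴf|² − 2Re(β hᴴf) over the ball ‖f‖² ≤ P̄ is the full-power
vector f⋆ = √P̄ β̄ h/(|β|‖h‖). -/
theorem stmt_15 {N : ℕ} (h : Fin N → ℂ) (hh : h ≠ 0) (β : ℂ) (hβ : β ≠ 0)
    (σ2 Pb α : ℝ) (hσ : 0 < σ2) (hPb : 0 < Pb) (h1 : α * σ2 ≤ 1)
    (g : (Fin N → ℂ) → ℝ)
    (hg : ∀ f, g f = (α * σ2 - 1) * ‖star h ⬝ᵥ f‖ ^ 2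
      - 2 * (β * (star h ⬝ᵥ f)).re)
    (fs : Fin N → ℂ)
    (hfs : fs = ((Real.sqrt Pb : ℂ) * (starRingEnd ℂ) β /
      ((‖β‖ : ℂ) * ((Real.sqrt (∑ i, ‖h i‖ ^ 2) : ℝ) : ℂ))) • h) :
    (∑ i, ‖fs i‖ ^ 2) ≤ Pb ∧
      ∀ f : Fin N → ℂ, (∑ i, ‖f i‖ ^ 2) ≤ Pb → g fs ≤ g f := by
  set S : ℝ := ∑ i, ‖h i‖ ^ 2 with hSdef
  have hS : 0 < S := by
    obtain ⟨i, hi⟩ := Function.ne_iff.mp hh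
    refine Finset.sum_pos' (fun j _ => by positivity) ⟨i, Finset.mem_univ i, ?_⟩
    exact pow_pos (norm_pos_iff.mpr hi) 2
  set R : ℝ := Real.sqrt S with hRdef
  have hR : 0 < R := Real.sqrt_pos.mpr hS
  have hR2 : R ^ 2 = S := Real.sq_sqrt hS.le
  have hβn : (0:ℝ) < ‖β‖ := norm_pos_iff.mpr hβ
  set c : ℂ := (Real.sqrt Pb : ℂ) * (starRingEnd ℂ) β / ((‖β‖ : ℂ) * (R : ℂ))
  have hcn : ‖c‖ = Real.sqrt Pb / R := by
    have h1 : ‖((Real.sqrt Pb : ℝ) : ℂ)‖ = Real.sqrt Pb := by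
      simp [Complex.norm_real, abs_of_nonneg (Real.sqrt_nonneg Pb)]
    have h2 : ‖((‖β‖ : ℝ) : ℂ)‖ = ‖β‖ := by
      simp [Complex.norm_real, abs_of_nonneg hβn.le]
    have h3 : ‖((R : ℝ) : ℂ)‖ = R := by
      simp [Complex.norm_real, abs_of_nonneg hR.le]
    rw [norm_div, norm_mul, norm_mul, h1, h2, h3, RCLike.norm_conj]
    rw [mul_comm (Real.sqrt Pb) ‖β‖, mul_div_mul_left _ _ hβn.ne']
  -- sum of squared norms of fs equals Pb
  have hsum : (∑ i, ‖fs i‖ ^ 2) = Pb := by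
    have : (∑ i, ‖fs i‖ ^ 2) = ‖c‖ ^ 2 * S := by
      rw [hfs]
      simp only [Pi.smul_apply, smul_eq_mul, norm_mul, mul_pow]
      rw [← Finset.mul_sum]
    rw [this, hcn]
    rw [div_pow, Real.sq_sqrt hPb.le, hR2]
    field_simp
  refine ⟨hsum.le, ?_⟩
  -- inner product with h
  have hdh : star h ⬝ᵥ h = (S : ℂ) := by
    simp only [dotProduct, Pi.star_apply, hSdef]
    push_cast
    exact Finset.sum_congr rfl fun i _ => Complex.conj_mul' (h i)
  have hdfs : star h ⬝ᵥ fs = c * (S : ℂ) := by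
    rw [hfs, dotProduct_smul, hdh, smul_eq_mul]
  have hβR0 : ((‖β‖ : ℂ) * (R : ℂ)) ≠ 0 := by
    simp only [ne_eq, mul_eq_zero, Complex.ofReal_eq_zero]
    push_neg
    exact ⟨ne_of_gt hβn, ne_of_gt hR⟩
  -- the value β * ⟨h, fs⟩ is real and positive
  have hre : (β * (star h ⬝ᵥ fs)).re = Real.sqrt Pb * ‖β‖ * R := by
    have : β * (star h ⬝ᵥ fs) = ((Real.sqrt Pb * ‖β‖ * R : ℝ) : ℂ) := by
      rw [hdfs]
      show β * ((Real.sqrt Pb : ℂ) * (starRingEnd ℂ) β / ((‖β‖ : ℂ) * (R : ℂ)) * (S:ℂ)) = _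
      have e1 : β * ((Real.sqrt Pb : ℂ) * (starRingEnd ℂ) β / ((‖β‖ : ℂ) * (R : ℂ)) * (S:ℂ))
          = (Real.sqrt Pb : ℂ) * (β * (starRingEnd ℂ) β) * (S:ℂ) / ((‖β‖ : ℂ) * (R : ℂ)) := by
        ring
      rw [e1, Complex.mul_conj', div_eq_iff hβR0, ← hR2]
      push_cast
      ring
    rw [this, Complex.ofReal_re]
  have hnfs : ‖star h ⬝ᵥ fs‖ = Real.sqrt Pb * R := by
    have hnS : ‖((S:ℝ):ℂ)‖ = S := by
      simp [Complex.norm_real, abs_of_nonneg hS.le]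
    rw [hdfs, norm_mul, hcn, hnS, ← hR2]
    field_simp
  intro f hf
  rw [hg, hg, hre, hnfs]
  -- Cauchy–Schwarz bound on ‖star h ⬝ᵥ f‖
  have cs : ‖star h ⬝ᵥ f‖ ≤ R * Real.sqrt (∑ i, ‖f i‖ ^ 2) := by
    have := norm_inner_le_norm (𝕜 := ℂ) (E := EuclideanSpace ℂ (Fin N))
      ((WithLp.equiv 2 _).symm h) ((WithLp.equiv 2 _).symm f)
    simpa [EuclideanSpace.norm_eq, PiLp.inner_apply, dotProduct, RCLike.inner_apply,
      mul_comm, hRdef, hSdef] using this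
  have hfle : Real.sqrt (∑ i, ‖f i‖ ^ 2) ≤ Real.sqrt Pb := Real.sqrt_le_sqrt hf
  have hzle : ‖star h ⬝ᵥ f‖ ≤ Real.sqrt Pb * R := by
    calc ‖star h ⬝ᵥ f‖ ≤ R * Real.sqrt (∑ i, ‖f i‖ ^ 2) := cs
    _ ≤ R * Real.sqrt Pb := by
        exact mul_le_mul_of_nonneg_left hfle hR.le
    _ = Real.sqrt Pb * R := mul_comm _ _
  have hrele : (β * (star h ⬝ᵥ f)).re ≤ ‖β‖ * ‖star h ⬝ᵥ f‖ := by
    calc (β * (star h ⬝ᵥ f)).re ≤ ‖β * (star h ⬝ᵥ f)‖ := Complex.re_le_norm _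
    _ = ‖β‖ * ‖star h ⬝ᵥ f‖ := norm_mul _ _
  have hz0 : (0:ℝ) ≤ ‖star h ⬝ᵥ f‖ := norm_nonneg _
  have hc0 : α * σ2 - 1 ≤ 0 := by linarith
  nlinarith [mul_nonneg hβn.le hz0, sq_nonneg (‖star h ⬝ᵥ f‖ - Real.sqrt Pb * R),
    mul_nonpos_of_nonpos_of_nonneg hc0 (sq_nonneg (‖star h ⬝ᵥ f‖)),
    mul_le_mul_of_nonpos_left (mul_self_le_mul_self hz0 hzle) hc0]
end
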